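/- Let m ≥ 1, k ≥ 0, let D be an m×m diagonal real matrix, let Λ be an m×k real matrix, and let c ∈ ℝ^k. Then S(D + (Λ + 𝟙cᵀ)(Λ + 𝟙cᵀ)ᵀ) = S(D + ΛΛᵀ); that is, translating every row of Λ by the same vector c leaves the matrix S of the factored covariance model unchanged. -/
import Mathlib


/-- The map `S` sending a covariance matrix `Σ` to the matrix of variances of
differences: `S(Σ)_{ij} = σ_ii + σ_jj - 2 σ_ij`. -/
def Smap {m : ℕ} (Cov : Matrix (Fin m) (Fin m) ℝ) : Matrix (Fin m) (Fin m) ℝ :=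
  Matrix.of fun i j => Cov i i + Cov j j - 2 * Cov i j

/-- Translating every row of `Λ` by the same vector `c` leaves the matrix
`S(D + Λ Λᵀ)` of the factored covariance model unchanged:
`S(D + (Λ + 𝟙cᵀ)(Λ + 𝟙cᵀ)ᵀ) = S(D + Λ Λᵀ)`. -/
theorem Smap_factored_row_translation_invariant
    (m k : ℕ) (hm : 1 ≤ m)
    (D : Matrix (Fin m) (Fin m) ℝ) (hD : D.IsDiag)
    (Λ : Matrix (Fin m) (Fin k) ℝ) (c : Fin k → ℝ) :
    Smap (D + (Λ + Matrix.vecMulVec (fun _ => (1 : ℝ)) c)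
            * (Λ + Matrix.vecMulVec (fun _ => (1 : ℝ)) c).transpose)
      = Smap (D + Λ * Λ.transpose) := by
  have key : ∀ a b : Fin m,
      (∑ t, (Λ a t + c t) * (Λ b t + c t)) =
        (∑ t, Λ a t * Λ b t) + (∑ t, Λ a t * c t) + (∑ t, Λ b t * c t)
          + (∑ t, c t * c t) := by
    intro a b
    rw [← Finset.sum_add_distrib, ← Finset.sum_add_distrib, ← Finset.sum_add_distrib]
    apply Finset.sum_congr rfl
    intro t _
    ring
  ext i j
  simp only [Smap, Matrix.of_apply, Matrix.add_apply, Matrix.mul_apply,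
    Matrix.transpose_apply, Matrix.vecMulVec_apply, one_mul, key]
  ring
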